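/- Let f* : [0,1]^d → ℝ be defined by f*(x) = Σ_{i=1}^{d} (x_i − 1/2)². Suppose f : [0,1]^d → ℝ is continuous, satisfies ‖f* − f‖_∞ ≤ 1/16 (sup over [0,1]^d), and has the property that the connected component of the level set f^{-1}(f(c)) containing the center c = (1/2,...,1/2), taken in ℝ^d for some continuous extension of f to ℝ^d, is unbounded. Then we obtain a contradiction: no such f exists. Formally: if f : ℝ^d → ℝ is continuous, sup_{x∈[0,1]^d} |f*(x) − f(x)| ≤ 1/16, then every connected component of f^{-1}(f(c)) containing c is contained in the open Euclidean ball of radius 1/2 around c, hence bounded. -/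

import Mathlib

theorem stmt_19 (d : ℕ) (hd : 1 ≤ d)
    (f : EuclideanSpace ℝ (Fin d) → ℝ) (hf : Continuous f)
    (happrox : ∀ x : EuclideanSpace ℝ (Fin d), (∀ i, x i ∈ Set.Icc (0:ℝ) 1) →
      |(∑ i, (x i - 1 / 2) ^ 2) - f x| ≤ 1 / 16)
    (c : EuclideanSpace ℝ (Fin d)) (hc : c = WithLp.toLp 2 (fun _ => 1 / 2)) :
    ∀ S : Set (EuclideanSpace ℝ (Fin d)), IsConnected S → S ⊆ f ⁻¹' {f c} → c ∈ S →
      S ⊆ Metric.ball c (1 / 2) := by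
  intro S hS hsub hcS
  by_contra h
  obtain ⟨x, hxS, hx⟩ := Set.not_subset.mp h
  rw [Metric.mem_ball, not_lt] at hx
  -- image of dist to c on S is connected in ℝ, contains 0 and dist x c ≥ 1/2
  have hconn : IsPreconnected ((fun y => dist y c) '' S) :=
    (hS.image _ (Continuous.continuousOn (by continuity))).isPreconnected
  have h0 : (0:ℝ) ∈ (fun y => dist y c) '' S := ⟨c, hcS, dist_self c⟩
  have hx2 : dist x c ∈ (fun y => dist y c) '' S := ⟨x, hxS, rfl⟩
  have hmem : (1/2 : ℝ) ∈ (fun y => dist y c) '' S := by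
    apply hconn.Icc_subset h0 hx2
    exact ⟨by norm_num, hx⟩
  obtain ⟨y, hyS, hy⟩ := hmem
  simp only at hy
  -- coordinates of y are in [0,1]
  have hdist : dist y c = Real.sqrt (∑ i, |y i - c i| ^ 2) := by
    rw [EuclideanSpace.dist_eq]
    congr 1
  have hsumsq : ∑ i, |y i - c i| ^ 2 = 1/4 := by
    have h1 : Real.sqrt (∑ i, |y i - c i| ^ 2) = 1/2 := by rw [← hdist, hy]
    have h2 : (0:ℝ) ≤ ∑ i, |y i - c i| ^ 2 :=
      Finset.sum_nonneg fun i _ => sq_nonneg _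
    nlinarith [Real.sq_sqrt h2]
  have hsum : ∑ i, (y i - 1/2) ^ 2 = 1/4 := by
    rw [← hsumsq]
    apply Finset.sum_congr rfl
    intro i _
    rw [sq_abs, hc]
  have hcoord : ∀ i, y i ∈ Set.Icc (0:ℝ) 1 := by
    intro i
    have hle : (y i - 1/2) ^ 2 ≤ 1/4 := by
      rw [← hsum]
      exact Finset.single_le_sum (f := fun j => (y j - 1/2)^2) (fun j _ => sq_nonneg _) (Finset.mem_univ i)
    constructor <;> nlinarith
  have hccoord : ∀ i, c i ∈ Set.Icc (0:ℝ) 1 := by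
    intro i; rw [hc]; constructor <;> norm_num
  have hcsum : ∑ i, (c i - 1/2) ^ 2 = 0 := by
    rw [hc]; simp
  have h1 := happrox y hcoord
  have h2 := happrox c hccoord
  rw [hsum] at h1
  rw [hcsum] at h2
  have hfy : f y = f c := hsub hyS
  rw [hfy] at h1
  rw [abs_le] at h1 h2
  linarith [h1.1, h1.2, h2.1, h2.2]
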